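/- Every simplex is a regular expansion of some other simplex: if Y = {y_1, …, y_n} ⊂ ℝ^d is a finite affinely independent set with n ≥ 2, then there exist k ∈ ℕ, points x_1, …, x_n ∈ ℝ^k whose underlying set is affinely independent, and α > 0 such that ‖y_i − y_j‖² = ‖x_i − x_j‖² + α² for all i ≠ j. -/

import Mathlib

open scoped Classical

noncomputable section

/-- The `j`-th vertex of a regular `m`-gon in the Euclidean plane with center `c`,
circumradius `r` and angle `θ`. -/
def polygonVertex (c : EuclideanSpace ℝ (Fin 2)) (r θ : ℝ) (m j : ℕ) :
    EuclideanSpace ℝ (Fin 2) :=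
  (WithLp.equiv 2 (Fin 2 → ℝ)).symm
    ![c 0 + r * Real.cos (2 * Real.pi * j / m + θ),
      c 1 + r * Real.sin (2 * Real.pi * j / m + θ)]

/-- `T` is (the vertex set of) a regular `m`-gon of circumradius `r` in the plane. -/
def IsRegularPolygon (m : ℕ) (r : ℝ) (T : Set (EuclideanSpace ℝ (Fin 2))) : Prop :=
  2 ≤ m ∧ 0 < r ∧
    ∃ (c : EuclideanSpace ℝ (Fin 2)) (θ : ℝ),
      T = {p | ∃ j < m, p = polygonVertex c r θ m j}

/-- The Cartesian product of `n` planar sets, viewed inside `ℝ^{2n}`. -/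
def toriProduct {n : ℕ} (T : Fin n → Set (EuclideanSpace ℝ (Fin 2))) :
    Set (EuclideanSpace ℝ (Fin n × Fin 2)) :=
  {x | ∀ i : Fin n, ((WithLp.equiv 2 (Fin 2 → ℝ)).symm fun j => x (i, j)) ∈ T i}

lemma norm_sum_smul_sq {n m : ℕ} (u : Fin n → EuclideanSpace ℝ (Fin m)) (w : Fin n → ℝ) :
    ‖∑ i, w i • u i‖ ^ 2 = ∑ i, ∑ j, w i * (inner ℝ (u i) (u j) : ℝ) * w j := by
  rw [← real_inner_self_eq_norm_sq, sum_inner]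
  refine Finset.sum_congr rfl fun i _ => ?_
  rw [real_inner_smul_left, inner_sum, Finset.mul_sum]
  refine Finset.sum_congr rfl fun j _ => ?_
  rw [real_inner_smul_right]; ring

lemma esq {n : ℕ} (w : EuclideanSpace ℝ (Fin n)) : ‖w‖ ^ 2 = ∑ i, (w i)^2 := by
  rw [EuclideanSpace.norm_eq, Real.sq_sqrt (by positivity)]
  simp [sq_abs]

open scoped MatrixOrder in
set_option maxHeartbeats 1000000 in
/-- Every simplex is a regular expansion of some other simplex: for any affinely
independent family `y` of `n ≥ 2` points there are points `x i` (whose underlying set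
is affinely independent) and `α > 0` with `‖y i - y j‖² = ‖x i - x j‖² + α²`. -/
theorem simplex_is_regular_expansion_of_simplex
    (n d : ℕ) (hn : 2 ≤ n) (y : Fin n → EuclideanSpace ℝ (Fin d))
    (hy : AffineIndependent ℝ y) :
    ∃ (k : ℕ) (x : Fin n → EuclideanSpace ℝ (Fin k)) (α : ℝ),
      AffineIndependent ℝ ((↑) : Set.range x → EuclideanSpace ℝ (Fin k)) ∧
      0 < α ∧
      ∀ i j, i ≠ j →
        dist (y i) (y j) ^ 2 = dist (x i) (x j) ^ 2 + α ^ 2 := by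
  have hnR : (0:ℝ) < n := by positivity
  -- center at the centroid
  set c0 : EuclideanSpace ℝ (Fin d) := (n:ℝ)⁻¹ • ∑ j, y j with hc0
  set v : Fin n → EuclideanSpace ℝ (Fin d) := fun i => y i - c0 with hv
  have hvsum : ∑ i, v i = 0 := by
    simp only [hv, Finset.sum_sub_distrib, Finset.sum_const, Finset.card_univ,
      Fintype.card_fin, hc0]
    rw [← Nat.cast_smul_eq_nsmul ℝ, smul_smul,
      mul_inv_cancel₀ (by positivity : (n:ℝ) ≠ 0), one_smul, sub_self]
  -- the linear map sending coefficients to the combination of the vᵢ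
  set L : EuclideanSpace ℝ (Fin n) →ₗ[ℝ] EuclideanSpace ℝ (Fin d) :=
    { toFun := fun w => ∑ i, w i • v i
      map_add' := by
        intro a b
        simp only [PiLp.add_apply, add_smul, Finset.sum_add_distrib]
      map_smul' := by
        intro m a
        simp only [PiLp.smul_apply, smul_eq_mul, RingHom.id_apply, Finset.smul_sum, smul_smul] }
    with hL
  have hLapp : ∀ w : EuclideanSpace ℝ (Fin n), L w = ∑ i, w i • v i := fun _ => rfl
  -- injectivity on the hyperplane of zero-sum coefficients
  have hker : ∀ w : EuclideanSpace ℝ (Fin n), (∑ i, w i) = 0 → L w = 0 → w = 0 := by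
    intro w hw hLw
    have h2 : ∑ i, w i • y i = 0 := by
      have : ∑ i, w i • y i = (∑ i, w i • v i) + (∑ i, w i) • c0 := by
        rw [Finset.sum_smul]
        rw [← Finset.sum_add_distrib]
        refine Finset.sum_congr rfl fun i _ => ?_
        rw [hv]; rw [smul_sub]; abel
      rw [this, hw, ← hLapp, hLw]; simp
    have := affineIndependent_iff.mp hy Finset.univ w (by simpa using hw) (by simpa using h2)
    ext i
    exact this i (Finset.mem_univ i)
  -- sum functional and its kernel hyperplane
  set S : EuclideanSpace ℝ (Fin n) →ₗ[ℝ] ℝ :=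
    { toFun := fun w => ∑ i, w i
      map_add' := by intro a b; simp [PiLp.add_apply, Finset.sum_add_distrib]
      map_smul' := by intro m a; simp [PiLp.smul_apply, Finset.mul_sum] } with hS
  set H : Submodule ℝ (EuclideanSpace ℝ (Fin n)) := LinearMap.ker S with hH
  have hkerL' : LinearMap.ker (L.domRestrict H) = ⊥ := by
    rw [LinearMap.ker_eq_bot']
    rintro ⟨w, hw⟩ hLw
    have hw0 : (∑ i, w i) = 0 := hw
    have hLw' : L w = 0 := hLw
    have : w = 0 := hker w hw0 hLw'
    exact Subtype.ext this
  obtain ⟨K, hK0, hK⟩ := (L.domRestrict H).exists_antilipschitzWith hkerL'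
  -- the key lower bound on the hyperplane
  have hlow : ∀ w : EuclideanSpace ℝ (Fin n), (∑ i, w i) = 0 → ‖w‖ ≤ K * ‖L w‖ := by
    intro w hw
    have := hK.le_mul_dist ⟨w, hw⟩ 0
    simpa [dist_eq_norm] using this
  set α : ℝ := (K:ℝ)⁻¹ with hα'
  have hα : 0 < α := by
    rw [hα']
    positivity
  -- the modified Gram matrix
  set M : Matrix (Fin n) (Fin n) ℝ :=
    fun i j => (inner ℝ (v i) (v j) : ℝ) - α^2/2 * (if i = j then 1 else 0) + α^2/(2*n) with hM
  -- quadratic form identity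
  have Qeq : ∀ w : EuclideanSpace ℝ (Fin n),
      ∑ i, ∑ j, w i * M i j * w j
        = ‖L w‖^2 - α^2/2 * (∑ i, (w i)^2) + α^2/(2*n) * (∑ i, w i)^2 := by
    intro w
    have e1 : ∑ i, ∑ j, w i * M i j * w j
        = ∑ i, ∑ j, (w i * (inner ℝ (v i) (v j) : ℝ) * w j
            - α^2/2 * (w i * (if i = j then (1:ℝ) else 0) * w j)
            + α^2/(2*n) * (w i * w j)) := by
      refine Finset.sum_congr rfl fun i _ => Finset.sum_congr rfl fun j _ => ?_
      simp only [hM]; ring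
    rw [e1]
    simp only [Finset.sum_add_distrib, Finset.sum_sub_distrib, ← Finset.mul_sum]
    have e2 : ∑ i, ∑ j, w i * (if i = j then (1:ℝ) else 0) * w j = ∑ i, (w i)^2 := by
      refine Finset.sum_congr rfl fun i _ => ?_
      simp [mul_ite, ite_mul, Finset.sum_ite_eq, sq]
    have e3 : ∑ i, (w i * ∑ j, w j) = (∑ i, w i)^2 := by
      rw [← Finset.sum_mul, sq]
    rw [e2, e3, hLapp, norm_sum_smul_sq]
  -- key lower bound for the quadratic form
  have hQ : ∀ w : EuclideanSpace ℝ (Fin n),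
      α^2/2 * (∑ i, (w i - (∑ l, w l)/n)^2) ≤ ∑ i, ∑ j, w i * M i j * w j := by
    intro w
    set s : ℝ := ∑ l, w l with hs
    set h : EuclideanSpace ℝ (Fin n) := (WithLp.equiv 2 (Fin n → ℝ)).symm (fun i => w i - s/n)
      with hh
    have hh_app : ∀ i, h i = w i - s/n := fun _ => rfl
    have hhsum : ∑ i, h i = 0 := by
      simp only [hh_app, Finset.sum_sub_distrib, Finset.sum_const, Finset.card_univ,
        Fintype.card_fin, nsmul_eq_mul, ← hs]
      field_simp
      ring
    have hLh : L h = L w := by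
      rw [hLapp, hLapp]
      have : ∑ i, h i • v i = ∑ i, w i • v i - (s/n) • ∑ i, v i := by
        rw [Finset.smul_sum, ← Finset.sum_sub_distrib]
        refine Finset.sum_congr rfl fun i _ => ?_
        rw [hh_app, sub_smul]
      rw [this, hvsum, smul_zero, sub_zero]
    have hsq : ∑ i, (h i)^2 = (∑ i, (w i)^2) - s^2/n := by
      have : ∀ i, (h i)^2 = (w i)^2 - 2*(s/n)*(w i) + (s/n)^2 := by
        intro i; rw [hh_app]; ring
      simp only [this, Finset.sum_add_distrib, Finset.sum_sub_distrib, ← Finset.mul_sum,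
        Finset.sum_const, Finset.card_univ, Fintype.card_fin, nsmul_eq_mul, ← hs]
      field_simp
      ring
    have hnormh : ‖h‖^2 = ∑ i, (h i)^2 := esq h
    have hLhge : α^2 * ∑ i, (h i)^2 ≤ ‖L h‖^2 := by
      have h1 : ‖h‖ ≤ K * ‖L h‖ := hlow h hhsum
      have h2 : ‖h‖^2 ≤ (K:ℝ)^2 * ‖L h‖^2 := by
        calc ‖h‖^2 ≤ ((K:ℝ) * ‖L h‖)^2 := pow_le_pow_left₀ (norm_nonneg _) h1 2
          _ = (K:ℝ)^2 * ‖L h‖^2 := mul_pow _ _ _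
      rw [hnormh] at h2
      rw [hα']
      have hKpos : (0:ℝ) < (K:ℝ) := hK0
      rw [inv_pow]
      rw [inv_mul_le_iff₀ (by positivity)]
      linarith [h2]
    have hQw := Qeq w
    have hfin : ∑ i, (w i - s/n)^2 = ∑ i, (h i)^2 := by
      refine Finset.sum_congr rfl fun i _ => ?_
      rw [hh_app]
    rw [hfin, hQw, ← hLh]
    have har : α^2/2 * (∑ i, (w i)^2) - α^2/(2*n) * s^2
        = α^2/2 * ((∑ i, (w i)^2) - s^2/n) := by
      field_simp
    have : α^2/2 * (∑ i, (h i)^2) = α^2/2 * (∑ i, (w i)^2) - α^2/(2*n) * s^2 := by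
      rw [hsq, har]
    linarith [hLhge, this]
  -- positive semidefiniteness
  have hMsym : M.IsHermitian := by
    ext i j
    rw [Matrix.conjTranspose_apply]
    simp only [Matrix.conjTranspose_apply, hM, star_trivial]
    rw [real_inner_comm]
    congr 2
    simp [eq_comm]
  have hMpsd : M.PosSemidef := by
    refine Matrix.posSemidef_iff_dotProduct_mulVec.mpr ⟨hMsym, fun z => ?_⟩
    have hz := hQ ((WithLp.equiv 2 (Fin n → ℝ)).symm z)
    have hz0 : (0:ℝ) ≤ ∑ i, ∑ j,
        ((WithLp.equiv 2 (Fin n → ℝ)).symm z) i * M i j * ((WithLp.equiv 2 (Fin n → ℝ)).symm z) j := by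
      refine le_trans ?_ hz
      positivity
    have : dotProduct (star z) (M.mulVec z) = ∑ i, ∑ j, z i * M i j * z j := by
      simp only [dotProduct, Matrix.mulVec, Pi.star_apply, star_trivial,
        dotProduct, Finset.mul_sum]
      refine Finset.sum_congr rfl fun i _ => Finset.sum_congr rfl fun j _ => ?_
      ring
    rw [this]
    exact hz0
  obtain ⟨B, hB⟩ := CStarAlgebra.nonneg_iff_eq_star_mul_self.mp hMpsd.nonneg
  -- the new points: columns of B
  set x : Fin n → EuclideanSpace ℝ (Fin n) :=
    fun i => (WithLp.equiv 2 (Fin n → ℝ)).symm (fun r => B r i) with hx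
  have hxin : ∀ i j, (inner ℝ (x i) (x j) : ℝ) = M i j := by
    intro i j
    rw [hB]
    simp only [hx, Matrix.star_eq_conjTranspose, PiLp.inner_apply, RCLike.inner_apply, Matrix.mul_apply,
      Matrix.conjTranspose_apply, star_trivial, WithLp.equiv_symm_apply, starRingEnd_apply]
    exact Finset.sum_congr rfl fun _ _ => mul_comm _ _
  -- distance identity
  have hdist : ∀ i j, i ≠ j → dist (x i) (x j) ^ 2 = dist (y i) (y j) ^ 2 - α^2 := by
    intro i j hij
    have hyv : y i - y j = v i - v j := by simp [hv]
    rw [dist_eq_norm, dist_eq_norm, ← real_inner_self_eq_norm_sq, ← real_inner_self_eq_norm_sq,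
      hyv, real_inner_sub_sub_self, real_inner_sub_sub_self, hxin, hxin, hxin,
      hM]
    simp only [if_neg hij, eq_self_iff_true, if_true]
    ring
  -- affine independence of the family x
  have hxai : AffineIndependent ℝ x := by
    rw [affineIndependent_iff]
    intro t w hw hcomb
    set W : EuclideanSpace ℝ (Fin n) :=
      (WithLp.equiv 2 (Fin n → ℝ)).symm (fun i => if i ∈ t then w i else 0) with hW
    have hW_app : ∀ i, W i = if i ∈ t then w i else 0 := fun _ => rfl
    have hWsum : ∑ i, W i = 0 := by
      simp only [hW_app]
      rw [Finset.sum_ite_mem, Finset.univ_inter]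
      exact hw
    have hWcomb : ∑ i, W i • x i = 0 := by
      have : ∑ i, W i • x i = ∑ i ∈ t, w i • x i := by
        simp only [hW_app, ite_smul, zero_smul]
        rw [Finset.sum_ite_mem, Finset.univ_inter]
      rw [this, hcomb]
    have hQW : ∑ i, ∑ j, W i * M i j * W j = 0 := by
      have h0 : ‖∑ i, W i • x i‖^2 = ∑ i, ∑ j, W i * M i j * W j := by
        rw [norm_sum_smul_sq]
        exact Finset.sum_congr rfl fun i _ => Finset.sum_congr rfl fun j _ => by rw [hxin]
      rw [hWcomb, norm_zero] at h0
      simpa using h0.symm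
    -- conclude all weights vanish
    have hWzero : ∀ i, W i = 0 := by
      have hb := hQ W
      rw [hQW, hWsum] at hb
      simp only [zero_div, sub_zero] at hb
      have hsum0 : ∑ i, (W i)^2 ≤ 0 := by
        by_contra hcon
        push_neg at hcon
        have : 0 < α^2/2 * ∑ i, (W i)^2 := by positivity
        linarith
      intro i
      have h1 : (W i)^2 ≤ 0 := by
        have h2 : (W i)^2 ≤ ∑ j, (W j)^2 := by
          simpa using Finset.single_le_sum (f := fun j => (W j)^2)
            (fun j _ => sq_nonneg (W j)) (Finset.mem_univ i)
        linarith
      have := sq_nonneg (W i)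
      nlinarith
    intro e he
    have := hWzero e
    rwa [hW_app, if_pos he] at this
  refine ⟨n, x, α, hxai.range, hα, fun i j hij => ?_⟩
  rw [hdist i j hij]
  ring
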